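/- For every nonzero solution x of the generalized Fermat system of type (k,n), the (n-1) × (n+1) Jacobian matrix whose (i,j) entry is the partial derivative ∂P_i/∂x_j evaluated at x has rank n-1. (That is, the generalized Fermat curve C^k(λ) ⊂ ℙ^n(ℂ) is a smooth complete intersection curve.) -/

import Mathlib

noncomputable section

/-- The polynomials `P₁, …, P_{n-1}` of the generalized Fermat system of type `(k,n)`:
`P₁ = x₀^k + x₁^k + x₂^k` and `P_{j+1} = λ_j·x₀^k + x₁^k + x_{j+2}^k` for `j = 1, …, n-2`
(0-indexed below). -/
def gfPoly (k n : ℕ) (hn : 3 ≤ n) (lam : Fin (n - 2) → ℂ) :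
    Fin (n - 1) → MvPolynomial (Fin (n + 1)) ℂ := fun i =>
  if (i : ℕ) = 0 then
    MvPolynomial.X ⟨0, by omega⟩ ^ k + MvPolynomial.X ⟨1, by omega⟩ ^ k +
      MvPolynomial.X ⟨2, by omega⟩ ^ k
  else
    MvPolynomial.C (lam ⟨(i : ℕ) - 1, by have := i.2; omega⟩) *
        MvPolynomial.X ⟨0, by omega⟩ ^ k +
      MvPolynomial.X ⟨1, by omega⟩ ^ k +
      MvPolynomial.X ⟨(i : ℕ) + 2, by have := i.2; omega⟩ ^ k

open MvPolynomial in
lemma gf_eval_pderiv_X_pow {N : ℕ} (k : ℕ) (x : Fin N → ℂ) (a j : Fin N) :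
    MvPolynomial.eval x (MvPolynomial.pderiv j (MvPolynomial.X a ^ k : MvPolynomial (Fin N) ℂ)) =
      if j = a then (k : ℂ) * x j ^ (k - 1) else 0 := by
  simp only [pderiv_pow, pderiv_X, Pi.single_apply]
  split_ifs with h h' h' <;> simp_all [eq_comm]

/-- The coefficient pattern of the Jacobian matrix. -/
def gfc (n : ℕ) (hn : 3 ≤ n) (lam : Fin (n - 2) → ℂ) (i : Fin (n - 1)) (j : Fin (n + 1)) : ℂ :=
  if (i : ℕ) = 0 then (if (j : ℕ) ≤ 2 then 1 else 0)
  else if (j : ℕ) = 0 then lam ⟨(i : ℕ) - 1, by have h := i.2; omega⟩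
  else if (j : ℕ) = 1 then 1
  else if (j : ℕ) = (i : ℕ) + 2 then 1 else 0

lemma gf_entry (k n : ℕ) (hn : 3 ≤ n) (lam : Fin (n - 2) → ℂ) (x : Fin (n + 1) → ℂ)
    (i : Fin (n - 1)) (j : Fin (n + 1)) :
    MvPolynomial.eval x (MvPolynomial.pderiv j (gfPoly k n hn lam i)) =
      (k : ℂ) * x j ^ (k - 1) * gfc n hn lam i j := by
  have hj := j.2
  have hi2 := i.2
  unfold gfPoly gfc
  by_cases hi : (i : ℕ) = 0
  · simp only [hi, if_true, map_add, gf_eval_pderiv_X_pow, Fin.ext_iff, Fin.val_mk]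
    split_ifs <;> first | ring1 | (exfalso; first | omega | simp_all)
  · simp only [hi, if_false, map_add, MvPolynomial.pderiv_C_mul, map_mul,
      MvPolynomial.eval_C, gf_eval_pderiv_X_pow, Fin.ext_iff, Fin.val_mk]
    split_ifs <;> first | ring1 | (exfalso; first | omega | simp_all)

lemma gf_eval (k n : ℕ) (hn : 3 ≤ n) (lam : Fin (n - 2) → ℂ) (x : Fin (n + 1) → ℂ)
    (i : Fin (n - 1)) :
    MvPolynomial.eval x (gfPoly k n hn lam i) =
      (if hi : (i : ℕ) = 0 then 1 else lam ⟨(i : ℕ) - 1, by have := i.2; omega⟩) *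
          x ⟨0, by omega⟩ ^ k + x ⟨1, by omega⟩ ^ k +
        x ⟨(i : ℕ) + 2, by have := i.2; omega⟩ ^ k := by
  unfold gfPoly
  by_cases hi : (i : ℕ) = 0 <;> simp [hi]

lemma gf_all_zero (k n : ℕ) (hk : 2 ≤ k) (hn : 3 ≤ n) (lam : Fin (n - 2) → ℂ)
    (x : Fin (n + 1) → ℂ)
    (hx : ∀ i, MvPolynomial.eval x (gfPoly k n hn lam i) = 0)
    (h0 : x ⟨0, by omega⟩ = 0) (h1 : x ⟨1, by omega⟩ = 0) : x = 0 := by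
  have hk0 : k ≠ 0 := by omega
  funext j
  show x j = 0
  rcases lt_or_ge (j : ℕ) 2 with hj | hj
  · interval_cases h : (j : ℕ)
    · have hje : j = ⟨0, by omega⟩ := Fin.ext h
      rw [hje, h0]
    · have hje : j = ⟨1, by omega⟩ := Fin.ext h
      rw [hje, h1]
  · have hj2 : (j : ℕ) - 2 < n - 1 := by have := j.2; omega
    have h := hx ⟨(j : ℕ) - 2, hj2⟩
    rw [gf_eval] at h
    have hjj : (⟨((⟨(j : ℕ) - 2, hj2⟩ : Fin (n - 1)) : ℕ) + 2, by simp only [Fin.val_mk]; omega⟩ :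
        Fin (n + 1)) = j := Fin.ext (by simp only [Fin.val_mk]; omega)
    rw [hjj, h0, h1, zero_pow hk0] at h
    simp only [mul_zero, add_zero, zero_add] at h
    exact pow_eq_zero_iff hk0 |>.mp h

theorem generalized_fermat_jacobian_rank (k n : ℕ) (hk : 2 ≤ k) (hn : 3 ≤ n)
    (lam : Fin (n - 2) → ℂ) (hl0 : ∀ j, lam j ≠ 0) (hl1 : ∀ j, lam j ≠ 1)
    (hinj : Function.Injective lam)
    (x : Fin (n + 1) → ℂ) (hx0 : x ≠ 0)
    (hx : ∀ i, MvPolynomial.eval x (gfPoly k n hn lam i) = 0) :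
    (Matrix.of fun (i : Fin (n - 1)) (j : Fin (n + 1)) =>
        MvPolynomial.eval x (MvPolynomial.pderiv j (gfPoly k n hn lam i))).rank = n - 1 := by
  have hk0 : (k : ℂ) ≠ 0 := Nat.cast_ne_zero.mpr (by omega)
  have hk1 : k - 1 ≠ 0 := by omega
  have hkn0 : k ≠ 0 := by omega
  -- the coefficient of row i in column 0
  set a : Fin (n - 1) → ℂ := fun i =>
    if hi : (i : ℕ) = 0 then 1 else lam ⟨(i : ℕ) - 1, by have := i.2; omega⟩ with ha
  have ha0 : ∀ i, a i ≠ 0 := by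
    intro i; simp only [ha]; split_ifs
    · exact one_ne_zero
    · apply hl0
  have hainj : ∀ i i' : Fin (n - 1), i ≠ i' → a i ≠ a i' := by
    intro i i' hne
    simp only [ha]
    split_ifs with h h' h'
    · exact absurd (Fin.ext (h.trans h'.symm)) hne
    · exact fun hc => hl1 _ hc.symm
    · exact fun hc => hl1 _ hc
    · intro hc
      have h2 := hinj hc
      rw [Fin.mk.injEq] at h2
      exact hne (Fin.ext (by omega))
  -- from the equations: a i * x0^k + x1^k + x_{i+2}^k = 0
  have heq : ∀ i : Fin (n - 1),
      a i * x ⟨0, by omega⟩ ^ k + x ⟨1, by omega⟩ ^ k +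
        x ⟨(i : ℕ) + 2, by have := i.2; omega⟩ ^ k = 0 := by
    intro i
    have h := hx i
    rwa [gf_eval] at h
  have hLI : LinearIndependent ℂ (Matrix.of fun (i : Fin (n - 1)) (j : Fin (n + 1)) =>
      MvPolynomial.eval x (MvPolynomial.pderiv j (gfPoly k n hn lam i))) := by
    refine Fintype.linearIndependent_iff.mpr ?_
    intro g hg
    have hcol : ∀ j : Fin (n + 1),
        (∑ i, g i * gfc n hn lam i j) * ((k : ℂ) * x j ^ (k - 1)) = 0 := by
      intro j
      have h := congrFun hg j
      simp only [Finset.sum_apply, Pi.smul_apply, Matrix.of_apply, smul_eq_mul,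
        Pi.zero_apply, gf_entry] at h
      rw [Finset.sum_mul, ← h]
      exact Finset.sum_congr rfl fun i _ => by ring
    -- column t+2 kills x_{t+2} if g t ≠ 0
    have hct : ∀ t : Fin (n - 1), g t ≠ 0 → x ⟨(t : ℕ) + 2, by have := t.2; omega⟩ = 0 := by
      intro t hgt
      have h := hcol ⟨(t : ℕ) + 2, by have := t.2; omega⟩
      have hsum : (∑ i, g i * gfc n hn lam i ⟨(t : ℕ) + 2, by have := t.2; omega⟩) = g t := by
        rw [Finset.sum_eq_single t]
        · have hgc : gfc n hn lam t ⟨(t : ℕ) + 2, by have := t.2; omega⟩ = 1 := by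
            unfold gfc
            simp only [Fin.val_mk]
            have h1 := t.2
            split_ifs <;> first | rfl | (exfalso; first | omega | simp_all)
          rw [hgc, mul_one]
        · intro i _ hne
          have hgc : gfc n hn lam i ⟨(t : ℕ) + 2, by have := t.2; omega⟩ = 0 := by
            unfold gfc
            simp only [Fin.val_mk]
            have h1 := t.2; have h2 := i.2
            have hne' : (i : ℕ) ≠ (t : ℕ) := fun hc => hne (Fin.ext hc)
            split_ifs <;> first | rfl | (exfalso; first | omega | simp_all)
          rw [hgc, mul_zero]
        · intro h; exact absurd (Finset.mem_univ t) h
      rw [hsum] at h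
      rcases mul_eq_zero.mp h with h' | h'
      · exact absurd h' hgt
      · rcases mul_eq_zero.mp h' with h'' | h''
        · exact absurd h'' hk0
        · exact pow_eq_zero_iff hk1 |>.mp h''
    by_contra hcon
    push_neg at hcon
    obtain ⟨i, hgi⟩ := hcon
    have hxi := hct i hgi
    have hx01 : x ⟨0, by omega⟩ = 0 ∧ x ⟨1, by omega⟩ = 0 := by
      by_cases hother : ∃ i', i' ≠ i ∧ g i' ≠ 0
      · obtain ⟨i', hii, hgi'⟩ := hother
        have hxi' := hct i' hgi'
        have e1 := heq i
        have e2 := heq i'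
        rw [hxi, zero_pow hkn0, add_zero] at e1
        rw [hxi', zero_pow hkn0, add_zero] at e2
        have hsub : (a i - a i') * x ⟨0, by omega⟩ ^ k = 0 := by
          linear_combination e1 - e2
        have h0 : x ⟨0, by omega⟩ = 0 := by
          rcases mul_eq_zero.mp hsub with h | h
          · exact absurd (sub_eq_zero.mp h) (hainj i i' (Ne.symm hii))
          · exact pow_eq_zero_iff hkn0 |>.mp h
        have h1 : x ⟨1, by omega⟩ = 0 := by
          rw [h0, zero_pow hkn0, mul_zero, zero_add] at e1
          exact pow_eq_zero_iff hkn0 |>.mp e1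
        exact ⟨h0, h1⟩
      · push_neg at hother
        have honly : ∀ i', i' ≠ i → g i' = 0 := hother
        have hc1 : gfc n hn lam i ⟨1, by omega⟩ = 1 := by
          unfold gfc
          simp only [Fin.val_mk]
          split_ifs <;> first | rfl | (exfalso; first | omega | simp_all)
        have hsum1 : (∑ i', g i' * gfc n hn lam i' ⟨1, by omega⟩) = g i := by
          rw [Finset.sum_eq_single i]
          · rw [hc1, mul_one]
          · intro i' _ hne; rw [honly i' hne, zero_mul]
          · intro h; exact absurd (Finset.mem_univ i) h
        have h1col := hcol ⟨1, by omega⟩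
        rw [hsum1] at h1col
        have h1 : x ⟨1, by omega⟩ = 0 := by
          rcases mul_eq_zero.mp h1col with h' | h'
          · exact absurd h' hgi
          · rcases mul_eq_zero.mp h' with h'' | h''
            · exact absurd h'' hk0
            · exact pow_eq_zero_iff hk1 |>.mp h''
        have hc0 : gfc n hn lam i ⟨0, by omega⟩ = a i := by
          unfold gfc
          simp only [ha, Fin.val_mk]
          split_ifs <;> first | rfl | (exfalso; first | omega | simp_all)
        have hsum0 : (∑ i', g i' * gfc n hn lam i' ⟨0, by omega⟩) = g i * a i := by
          rw [Finset.sum_eq_single i]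
          · rw [hc0]
          · intro i' _ hne; rw [honly i' hne, zero_mul]
          · intro h; exact absurd (Finset.mem_univ i) h
        have h0col := hcol ⟨0, by omega⟩
        rw [hsum0] at h0col
        have h0 : x ⟨0, by omega⟩ = 0 := by
          rcases mul_eq_zero.mp h0col with h' | h'
          · rcases mul_eq_zero.mp h' with h'' | h''
            · exact absurd h'' hgi
            · exact absurd h'' (ha0 i)
          · rcases mul_eq_zero.mp h' with h'' | h''
            · exact absurd h'' hk0
            · exact pow_eq_zero_iff hk1 |>.mp h''
        exact ⟨h0, h1⟩
    exact hx0 (gf_all_zero k n hk hn lam x hx hx01.1 hx01.2)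
  have hr := hLI.rank_matrix
  simpa using hr
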